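/- Let (ξ_i)_{i≥0} be the stationary Markov chain on [−1,1] with transition kernel Q(x,A) = (1 − |x|)·δ_x(A) + |x|·ν(A), ν(dx) = |x| dx, and marginal distribution π(dx) = dx/2, and set X_i = sign(ξ_i). Then for every m ≥ 0: 𝔼(X₀ · X_m) = 1/(m+1); equivalently, ∫_{−1}^{1} (1 − |x|)^m · (dx/2) = 1/(m+1). -/

import Mathlib

open MeasureTheory Filter Set
open scoped ENNReal Topology

noncomputable def nuMH : Measure ℝ :=
  (volume.restrict (Set.Icc (-1 : ℝ) 1)).withDensity fun x => ENNReal.ofReal |x|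

noncomputable def piMH : Measure ℝ :=
  (volume.restrict (Set.Icc (-1 : ℝ) 1)).withDensity fun _ => ENNReal.ofReal (1 / 2)

noncomputable def QMH (x : ℝ) : Measure ℝ :=
  ENNReal.ofReal (1 - |x|) • Measure.dirac x + ENNReal.ofReal |x| • nuMH

def pastFilt {Ω : Type*} [MeasurableSpace Ω] (ξ : ℕ → Ω → ℝ) (k : ℕ) :
    MeasurableSpace Ω :=
  ⨆ i ≤ k, MeasurableSpace.comap (ξ i) inferInstance

lemma nuMH_univ_le : nuMH Set.univ ≤ 2 := by
  rw [nuMH, withDensity_apply _ MeasurableSet.univ, Measure.restrict_restrict MeasurableSet.univ]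
  simp only [Set.univ_inter]
  calc ∫⁻ x in Set.Icc (-1:ℝ) 1, ENNReal.ofReal |x| ∂volume
      ≤ ∫⁻ _ in Set.Icc (-1:ℝ) 1, 1 ∂volume := by
        apply setLIntegral_mono measurable_const
        intro x hx
        rw [show (1:ℝ≥0∞) = ENNReal.ofReal 1 by simp]
        exact ENNReal.ofReal_le_ofReal (abs_le.mpr ⟨hx.1, hx.2⟩)
    _ = 2 := by
        rw [setLIntegral_one, Real.volume_Icc]
        norm_num
lemma piMH_univ : piMH Set.univ = 1 := by
  rw [piMH, withDensity_apply _ MeasurableSet.univ, Measure.restrict_restrict MeasurableSet.univ]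
  simp only [Set.univ_inter, setLIntegral_const]
  rw [Real.volume_Icc]
  rw [← ENNReal.ofReal_mul (by norm_num)]
  norm_num

instance : IsProbabilityMeasure piMH := ⟨piMH_univ⟩

lemma lintegral_QMH {g : ℝ → ℝ≥0∞} (hg : Measurable g) (x : ℝ) :
    ∫⁻ y, g y ∂QMH x
      = ENNReal.ofReal (1 - |x|) * g x + ENNReal.ofReal |x| * ∫⁻ y, g y ∂nuMH := by
  rw [QMH, lintegral_add_measure, lintegral_smul_measure, lintegral_smul_measure,
    lintegral_dirac' _ hg, smul_eq_mul, smul_eq_mul]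

lemma measurable_QMH_lintegral {g : ℝ → ℝ≥0∞} (hg : Measurable g) :
    Measurable fun x => ∫⁻ y, g y ∂QMH x := by
  simp only [fun x => lintegral_QMH hg x]
  fun_prop

lemma piMH_eq : piMH = (ENNReal.ofReal (1/2)) • (volume.restrict (Set.Icc (-1 : ℝ) 1)) := by
  rw [piMH, withDensity_const]

lemma integral_Icc_abs_pow (m : ℕ) :
    ∫ x in Set.Icc (-1:ℝ) 1, (1 - |x|) ^ m = 2 / (m + 1) := by
  have hc : ∀ a b : ℝ, IntervalIntegrable (fun x => (1 - |x|)^m) volume a b :=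
    fun a b => (Continuous.pow (by continuity) m).intervalIntegrable a b
  rw [MeasureTheory.integral_Icc_eq_integral_Ioc,
     ← intervalIntegral.integral_of_le (by norm_num : (-1:ℝ) ≤ 1),
     ← intervalIntegral.integral_add_adjacent_intervals (b := 0) (hc _ _) (hc _ _)]
  have h1 : ∫ x in (-1:ℝ)..0, (1 - |x|)^m = ∫ x in (-1:ℝ)..0, (x + 1)^m := by
    apply intervalIntegral.integral_congr
    intro x hx
    rw [Set.uIcc_of_le (by norm_num)] at hx
    have : |x| = -x := abs_of_nonpos hx.2
    simp only []; rw [this]; ring_nf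
  have h2 : ∫ x in (0:ℝ)..1, (1 - |x|)^m = ∫ x in (0:ℝ)..1, (1 - x)^m := by
    apply intervalIntegral.integral_congr
    intro x hx
    rw [Set.uIcc_of_le (by norm_num)] at hx
    simp only []; rw [abs_of_nonneg hx.1]
  rw [h1, h2, intervalIntegral.integral_comp_add_right (fun x => x^m) 1,
    intervalIntegral.integral_comp_sub_left (fun x => x^m) 1]
  norm_num [integral_pow]
  ring

lemma integral_piMH_pow (m : ℕ) :
    ∫ x, (1 - |x|) ^ m ∂piMH = 1 / (m + 1) := by
  rw [piMH_eq, integral_smul_measure, ENNReal.toReal_ofReal (by norm_num),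
    integral_Icc_abs_pow, smul_eq_mul]
  field_simp

set_option linter.unusedSectionVars false

section aux
variable {Ω : Type*} [MeasurableSpace Ω] {P : Measure Ω} [IsProbabilityMeasure P]
  {ξ : ℕ → Ω → ℝ}

lemma pastFilt_le (hmeas : ∀ i, Measurable (ξ i)) (k : ℕ) :
    pastFilt ξ k ≤ ‹MeasurableSpace Ω› :=
  iSup₂_le fun i _ => (hmeas i).comap_le

lemma measurable_pastFilt_xi0 (k : ℕ) : Measurable[pastFilt ξ k] (ξ 0) := by
  rw [measurable_iff_comap_le]
  exact le_iSup₂ (f := fun i (_ : i ≤ k) => MeasurableSpace.comap (ξ i) inferInstance)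
    0 (Nat.zero_le k)

lemma piMH_compl_Icc : piMH (Set.Icc (-1:ℝ) 1)ᶜ = 0 := by
  rw [piMH, withDensity_apply _ (measurableSet_Icc.compl), setLIntegral_const,
    Measure.restrict_apply (measurableSet_Icc.compl)]
  simp [Set.compl_inter_self]

lemma ae_mem_Icc (hmeas : ∀ i, Measurable (ξ i)) (hmarg : ∀ i, P.map (ξ i) = piMH)
    (k : ℕ) : ∀ᵐ ω ∂P, ξ k ω ∈ Set.Icc (-1:ℝ) 1 := by
  have : P ((ξ k)⁻¹' (Set.Icc (-1:ℝ) 1)ᶜ) = 0 := by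
    rw [← Measure.map_apply (hmeas k) measurableSet_Icc.compl, hmarg k, piMH_compl_Icc]
  filter_upwards [measure_eq_zero_iff_ae_notMem.mp this] with ω h
  simpa using h

end aux
set_option linter.unusedSectionVars false

section aux2
variable {Ω : Type*} [MeasurableSpace Ω] {P : Measure Ω} [IsProbabilityMeasure P]
  {ξ : ℕ → Ω → ℝ}

lemma QMH_apply_le {x : ℝ} (hx : x ∈ Set.Icc (-1:ℝ) 1) (s : Set ℝ) : QMH x s ≤ 3 := by
  have h1 : ENNReal.ofReal (1 - |x|) ≤ 1 := by
    rw [show (1:ℝ≥0∞) = ENNReal.ofReal 1 by simp]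
    exact ENNReal.ofReal_le_ofReal (by nlinarith [abs_nonneg x])
  have h2 : ENNReal.ofReal |x| ≤ 1 := by
    rw [show (1:ℝ≥0∞) = ENNReal.ofReal 1 by simp]
    exact ENNReal.ofReal_le_ofReal (abs_le.mpr ⟨hx.1, hx.2⟩)
  calc QMH x s ≤ QMH x Set.univ := measure_mono (Set.subset_univ s)
    _ = ENNReal.ofReal (1 - |x|) * Measure.dirac x Set.univ
        + ENNReal.ofReal |x| * nuMH Set.univ := by
        rw [QMH]; simp [Measure.add_apply]
    _ ≤ 1 * 1 + 1 * 2 := by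
        gcongr
        · exact le_of_eq (by simp)
        · exact nuMH_univ_le
    _ ≤ 3 := by norm_num

lemma QMH_ne_top {x : ℝ} (s : Set ℝ) : QMH x s ≠ ∞ := by
  have : QMH x s ≤ QMH x Set.univ := measure_mono (Set.subset_univ s)
  refine ne_top_of_le_ne_top ?_ this
  rw [QMH]
  simp only [Measure.add_apply, Measure.smul_apply, smul_eq_mul]
  refine ENNReal.add_ne_top.mpr ⟨?_, ?_⟩
  · exact ENNReal.mul_ne_top ENNReal.ofReal_ne_top (by simp)
  · exact ENNReal.mul_ne_top ENNReal.ofReal_ne_top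
      (ne_top_of_le_ne_top (by norm_num) nuMH_univ_le)

lemma measurable_QMH_apply {s : Set ℝ} (hs : MeasurableSet s) :
    Measurable fun x => QMH x s := by
  have : (fun x => QMH x s)
      = fun x => ENNReal.ofReal (1 - |x|) * s.indicator (fun _ => 1) x
        + ENNReal.ofReal |x| * nuMH s := by
    funext x
    rw [QMH]
    simp only [Measure.add_apply, Measure.smul_apply, smul_eq_mul,
      Measure.dirac_apply' _ hs]
    rfl
  rw [this]
  exact ((measurable_const.sub _root_.continuous_abs.measurable).ennreal_ofReal.mul
      ((measurable_const (a := (1:ℝ≥0∞))).indicator hs)).add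
    (_root_.continuous_abs.measurable.ennreal_ofReal.mul measurable_const)

-- real indicator version of Markov property, integrated over a ξ0-event
lemma markov_set (hmeas : ∀ i, Measurable (ξ i))
    (hMarkov : ∀ (k : ℕ) (A : Set ℝ), MeasurableSet A →
      (P[fun ω => Set.indicator A (fun _ => (1 : ℝ)) (ξ (k + 1) ω) | pastFilt ξ k])
        =ᵐ[P] fun ω => (QMH (ξ k ω) A).toReal)
    (k : ℕ) {B A : Set ℝ} (hB : MeasurableSet B) (hA : MeasurableSet A) :
    ∫ ω in (ξ 0)⁻¹' B, Set.indicator A (fun _ => (1:ℝ)) (ξ (k+1) ω) ∂P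
      = ∫ ω in (ξ 0)⁻¹' B, (QMH (ξ k ω) A).toReal ∂P := by
  have hm := pastFilt_le hmeas k
  have hS : MeasurableSet[pastFilt ξ k] ((ξ 0)⁻¹' B) := measurable_pastFilt_xi0 k hB
  have hf : Integrable (fun ω => Set.indicator A (fun _ => (1:ℝ)) (ξ (k+1) ω)) P := by
    have : (fun ω => Set.indicator A (fun _ => (1:ℝ)) (ξ (k+1) ω))
        = Set.indicator ((ξ (k+1))⁻¹' A) (fun _ => (1:ℝ)) := by
      funext ω; by_cases h : ξ (k+1) ω ∈ A <;>
        simp [Set.indicator_apply, Set.mem_preimage, h]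
    rw [this]
    exact (integrable_const 1).indicator ((hmeas (k+1)) hA)
  rw [← setIntegral_condExp hm hf hS]
  exact setIntegral_congr_ae (hm _ hS)
    ((hMarkov k A hA).mono fun ω h _ => h)
end aux2

section aux3
variable {Ω : Type*} [MeasurableSpace Ω] {P : Measure Ω} [IsProbabilityMeasure P]
  {ξ : ℕ → Ω → ℝ}

lemma markov_lintegral_indicator (hmeas : ∀ i, Measurable (ξ i))
    (hmarg : ∀ i, P.map (ξ i) = piMH)
    (hMarkov : ∀ (k : ℕ) (A : Set ℝ), MeasurableSet A →
      (P[fun ω => Set.indicator A (fun _ => (1 : ℝ)) (ξ (k + 1) ω) | pastFilt ξ k])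
        =ᵐ[P] fun ω => (QMH (ξ k ω) A).toReal)
    (k : ℕ) {B A : Set ℝ} (hB : MeasurableSet B) (hA : MeasurableSet A) :
    (P.restrict ((ξ 0)⁻¹' B)) ((ξ (k+1))⁻¹' A)
      = ∫⁻ ω in (ξ 0)⁻¹' B, QMH (ξ k ω) A ∂P := by
  have hmem := ae_mem_Icc hmeas hmarg k
  have hne : ∫⁻ ω in (ξ 0)⁻¹' B, QMH (ξ k ω) A ∂P ≠ ∞ := by
    refine ne_top_of_le_ne_top (b := 3 * P ((ξ 0)⁻¹' B)) ?_ ?_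
    · exact ENNReal.mul_ne_top (by norm_num) (measure_ne_top _ _)
    · calc ∫⁻ ω in (ξ 0)⁻¹' B, QMH (ξ k ω) A ∂P
          ≤ ∫⁻ _ in (ξ 0)⁻¹' B, 3 ∂P := by
            refine lintegral_mono_ae ?_
            filter_upwards [ae_restrict_of_ae hmem] with ω hω
            exact QMH_apply_le hω A
        _ = 3 * P ((ξ 0)⁻¹' B) := by
            rw [setLIntegral_const, mul_comm]
  have hmR : Measurable fun ω => QMH (ξ k ω) A := (measurable_QMH_apply hA).comp (hmeas k)
  have key := markov_set hmeas hMarkov k hB hA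
  have hL : ∫ ω in (ξ 0)⁻¹' B, Set.indicator A (fun _ => (1:ℝ)) (ξ (k+1) ω) ∂P
      = ((P.restrict ((ξ 0)⁻¹' B)) ((ξ (k+1))⁻¹' A)).toReal := by
    have : (fun ω => Set.indicator A (fun _ => (1:ℝ)) (ξ (k+1) ω))
        = Set.indicator ((ξ (k+1))⁻¹' A) (fun _ => (1:ℝ)) := by
      funext ω; by_cases h : ξ (k+1) ω ∈ A <;>
        simp [Set.indicator_apply, Set.mem_preimage, h]
    rw [this, integral_indicator_const _ ((hmeas (k+1)) hA)]
    simp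
    rfl
  have hR : ∫ ω in (ξ 0)⁻¹' B, (QMH (ξ k ω) A).toReal ∂P
      = (∫⁻ ω in (ξ 0)⁻¹' B, QMH (ξ k ω) A ∂P).toReal := by
    rw [integral_toReal (hmR.aemeasurable.restrict)
      (ae_of_all _ fun ω => (QMH_ne_top A).lt_top)]
  rw [hL, hR] at key
  exact (ENNReal.toReal_eq_toReal_iff' (measure_ne_top _ _) hne).mp key

lemma markov_lintegral (hmeas : ∀ i, Measurable (ξ i))
    (hmarg : ∀ i, P.map (ξ i) = piMH)
    (hMarkov : ∀ (k : ℕ) (A : Set ℝ), MeasurableSet A →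
      (P[fun ω => Set.indicator A (fun _ => (1 : ℝ)) (ξ (k + 1) ω) | pastFilt ξ k])
        =ᵐ[P] fun ω => (QMH (ξ k ω) A).toReal)
    (k : ℕ) {B : Set ℝ} (hB : MeasurableSet B) {g : ℝ → ℝ≥0∞} (hg : Measurable g) :
    ∫⁻ ω in (ξ 0)⁻¹' B, g (ξ (k+1) ω) ∂P
      = ∫⁻ ω in (ξ 0)⁻¹' B, (∫⁻ y, g y ∂QMH (ξ k ω)) ∂P := by
  refine Measurable.ennreal_induction
    (motive := fun g => ∫⁻ ω in (ξ 0)⁻¹' B, g (ξ (k+1) ω) ∂P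
      = ∫⁻ ω in (ξ 0)⁻¹' B, (∫⁻ y, g y ∂QMH (ξ k ω)) ∂P) ?_ ?_ ?_ hg
  · intro c s hs
    have h1 : (fun ω => Set.indicator s (fun _ => c) (ξ (k+1) ω))
        = fun ω => c * Set.indicator ((ξ (k+1))⁻¹' s) (fun _ => (1:ℝ≥0∞)) ω := by
      funext ω; by_cases h : ξ (k+1) ω ∈ s <;>
        simp [Set.indicator_apply, Set.mem_preimage, h]
    have h2 : ∀ x : ℝ, ∫⁻ y, Set.indicator s (fun _ => c) y ∂QMH x = c * QMH x s := by
      intro x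
      rw [lintegral_indicator_const hs]
    simp only [h1, h2]
    rw [lintegral_const_mul c (show Measurable fun ω =>
        Set.indicator ((ξ (k+1))⁻¹' s) (fun _ => (1:ℝ≥0∞)) ω from
        measurable_const.indicator ((hmeas (k+1)) hs)),
      lintegral_const_mul c (show Measurable fun ω => QMH (ξ k ω) s from
        (measurable_QMH_apply hs).comp (hmeas k))]
    congr 1
    rw [lintegral_indicator_const ((hmeas (k+1)) hs) (1:ℝ≥0∞), one_mul]
    exact markov_lintegral_indicator hmeas hmarg hMarkov k hB hs
  · intro f g _ hfm hgm hf hg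
    simp only [Pi.add_apply]
    have h4 : ∀ x : ℝ, ∫⁻ y, (f y + g y) ∂QMH x
        = (∫⁻ y, f y ∂QMH x) + ∫⁻ y, g y ∂QMH x := fun x => lintegral_add_left hfm g
    simp only [h4]
    rw [lintegral_add_left (show Measurable fun ω => f (ξ (k+1) ω) from
        hfm.comp (hmeas (k+1))),
      lintegral_add_left (show Measurable fun ω => ∫⁻ y, f y ∂QMH (ξ k ω) from
        (measurable_QMH_lintegral hfm).comp (hmeas k)), hf, hg]
  · intro f hfm hmono hind
    have h3 : ∀ x : ℝ, ∫⁻ y, (⨆ n, f n y) ∂QMH x = ⨆ n, ∫⁻ y, f n y ∂QMH x :=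
      fun x => lintegral_iSup hfm hmono
    simp only [h3]
    rw [lintegral_iSup (fun n => (show Measurable fun ω => f n (ξ (k+1) ω) from
        (hfm n).comp (hmeas (k+1)))) (fun a b hab ω => hmono hab _),
      lintegral_iSup (fun n => (show Measurable fun ω => ∫⁻ y, f n y ∂QMH (ξ k ω) from
        (measurable_QMH_lintegral (hfm n)).comp (hmeas k)))
        (fun a b hab ω => lintegral_mono fun y => hmono hab y)]
    exact iSup_congr hind
end aux3

noncomputable def UMH (j : ℕ) : ℝ → ℝ≥0∞ :=
  (Set.Ioi (0:ℝ)).indicator fun y => ENNReal.ofReal ((1 - |y|) ^ j)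

noncomputable def VMH (j : ℕ) : ℝ → ℝ≥0∞ :=
  (Set.Iio (0:ℝ)).indicator fun y => ENNReal.ofReal ((1 - |y|) ^ j)

lemma UMH_measurable (j : ℕ) : Measurable (UMH j) :=
  Measurable.indicator (by fun_prop) measurableSet_Ioi

lemma VMH_measurable (j : ℕ) : Measurable (VMH j) :=
  Measurable.indicator (by fun_prop) measurableSet_Iio

lemma UMH_neg (j : ℕ) (x : ℝ) : UMH j (-x) = VMH j x := by
  unfold UMH VMH
  rw [Set.indicator_apply, Set.indicator_apply]
  simp only [Set.mem_Ioi, Set.mem_Iio, neg_pos, abs_neg]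

lemma UMH_le_one {j : ℕ} {x : ℝ} (hx : x ∈ Set.Icc (-1:ℝ) 1) : UMH j x ≤ 1 := by
  have h1 : (1 - |x|) ^ j ≤ 1 := by
    apply pow_le_one₀ (by nlinarith [abs_le.mpr ⟨hx.1, hx.2⟩, abs_nonneg x])
    nlinarith [abs_nonneg x]
  unfold UMH
  rw [Set.indicator_apply]
  split_ifs
  · exact (ENNReal.ofReal_le_ofReal h1).trans_eq ENNReal.ofReal_one
  · exact zero_le_one

lemma VMH_le_one {j : ℕ} {x : ℝ} (hx : x ∈ Set.Icc (-1:ℝ) 1) : VMH j x ≤ 1 := by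
  rw [← UMH_neg j x]
  exact UMH_le_one (by constructor <;> [linarith [hx.2]; linarith [hx.1]])

lemma CMH_symm (j : ℕ) : ∫⁻ y, UMH j y ∂nuMH = ∫⁻ y, VMH j y ∂nuMH := by
  rw [nuMH, lintegral_withDensity_eq_lintegral_mul _ (by fun_prop) (UMH_measurable j),
    lintegral_withDensity_eq_lintegral_mul _ (by fun_prop) (VMH_measurable j)]
  have hneg : (Neg.neg)⁻¹' (Set.Icc (-1:ℝ) 1) = Set.Icc (-1:ℝ) 1 := by
    ext x
    simp only [Set.mem_preimage, Set.mem_Icc]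
    constructor <;> intro h <;> constructor <;> linarith [h.1, h.2]
  have hmap : volume.restrict (Set.Icc (-1:ℝ) 1)
      = (volume.restrict (Set.Icc (-1:ℝ) 1)).map Neg.neg := by
    conv_lhs => rw [← Measure.map_neg_eq_self (volume : Measure ℝ)]
    rw [Measure.restrict_map measurable_neg measurableSet_Icc, hneg]
  conv_lhs => rw [hmap]
  rw [lintegral_map (by exact ((by fun_prop : Measurable fun x : ℝ => ENNReal.ofReal |x|).mul
    (UMH_measurable j))) measurable_neg]
  congr 1
  funext x
  simp only [Pi.mul_apply, abs_neg, UMH_neg]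

lemma QMH_lintegral_UMH {j : ℕ} {x : ℝ} (hx : x ∈ Set.Icc (-1:ℝ) 1) :
    ∫⁻ y, UMH j y ∂QMH x
      = UMH (j+1) x + ENNReal.ofReal |x| * ∫⁻ y, UMH j y ∂nuMH := by
  rw [lintegral_QMH (UMH_measurable j)]
  congr 1
  have h0 : (0:ℝ) ≤ 1 - |x| := by nlinarith [abs_le.mpr ⟨hx.1, hx.2⟩]
  unfold UMH
  rw [Set.indicator_apply, Set.indicator_apply]
  split_ifs
  · rw [← ENNReal.ofReal_mul h0, ← pow_succ']
  · simp

lemma QMH_lintegral_VMH {j : ℕ} {x : ℝ} (hx : x ∈ Set.Icc (-1:ℝ) 1) :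
    ∫⁻ y, VMH j y ∂QMH x
      = VMH (j+1) x + ENNReal.ofReal |x| * ∫⁻ y, VMH j y ∂nuMH := by
  rw [lintegral_QMH (VMH_measurable j)]
  congr 1
  have h0 : (0:ℝ) ≤ 1 - |x| := by nlinarith [abs_le.mpr ⟨hx.1, hx.2⟩]
  unfold VMH
  rw [Set.indicator_apply, Set.indicator_apply]
  split_ifs
  · rw [← ENNReal.ofReal_mul h0, ← pow_succ']
  · simp

lemma nuMH_compl_Icc : nuMH (Set.Icc (-1:ℝ) 1)ᶜ = 0 := by
  rw [nuMH, withDensity_apply _ (measurableSet_Icc.compl),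
    Measure.restrict_restrict measurableSet_Icc.compl]
  simp [Set.compl_inter_self]

lemma CMH_le_two (j : ℕ) : ∫⁻ y, UMH j y ∂nuMH ≤ 2 := by
  calc ∫⁻ y, UMH j y ∂nuMH ≤ ∫⁻ _, 1 ∂nuMH := by
        refine lintegral_mono_ae ?_
        have : ∀ᵐ y ∂nuMH, y ∈ Set.Icc (-1:ℝ) 1 := by
          filter_upwards [measure_eq_zero_iff_ae_notMem.mp nuMH_compl_Icc] with y h
          simpa using h
        filter_upwards [this] with y hy using UMH_le_one hy
    _ = nuMH Set.univ := by simp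
    _ ≤ 2 := nuMH_univ_le

section aux4
variable {Ω : Type*} [MeasurableSpace Ω] {P : Measure Ω} [IsProbabilityMeasure P]
  {ξ : ℕ → Ω → ℝ}

lemma lint_le_one (hmeas : ∀ i, Measurable (ξ i)) (hmarg : ∀ i, P.map (ξ i) = piMH)
    {f : ℝ → ℝ≥0∞} (hfb : ∀ x ∈ Set.Icc (-1:ℝ) 1, f x ≤ 1) (k : ℕ) (B : Set ℝ) :
    ∫⁻ ω in (ξ 0)⁻¹' B, f (ξ k ω) ∂P ≤ 1 := by
  calc ∫⁻ ω in (ξ 0)⁻¹' B, f (ξ k ω) ∂P ≤ ∫⁻ _ in (ξ 0)⁻¹' B, 1 ∂P := by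
        refine lintegral_mono_ae ?_
        filter_upwards [ae_restrict_of_ae (ae_mem_Icc hmeas hmarg k)] with ω hω
        exact hfb _ hω
    _ = P ((ξ 0)⁻¹' B) := by simp
    _ ≤ 1 := prob_le_one

lemma step_UV (hmeas : ∀ i, Measurable (ξ i)) (hmarg : ∀ i, P.map (ξ i) = piMH)
    (hMarkov : ∀ (k : ℕ) (A : Set ℝ), MeasurableSet A →
      (P[fun ω => Set.indicator A (fun _ => (1 : ℝ)) (ξ (k + 1) ω) | pastFilt ξ k])
        =ᵐ[P] fun ω => (QMH (ξ k ω) A).toReal)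
    (k j : ℕ) {B : Set ℝ} (hB : MeasurableSet B) :
    (∫⁻ ω in (ξ 0)⁻¹' B, UMH j (ξ (k+1) ω) ∂P).toReal
      - (∫⁻ ω in (ξ 0)⁻¹' B, VMH j (ξ (k+1) ω) ∂P).toReal
    = (∫⁻ ω in (ξ 0)⁻¹' B, UMH (j+1) (ξ k ω) ∂P).toReal
      - (∫⁻ ω in (ξ 0)⁻¹' B, VMH (j+1) (ξ k ω) ∂P).toReal := by
  have hmem := ae_restrict_of_ae (s := (ξ 0)⁻¹' B) (ae_mem_Icc hmeas hmarg k)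
  have hU : ∫⁻ ω in (ξ 0)⁻¹' B, UMH j (ξ (k+1) ω) ∂P
      = (∫⁻ ω in (ξ 0)⁻¹' B, UMH (j+1) (ξ k ω) ∂P)
        + (∫⁻ ω in (ξ 0)⁻¹' B, ENNReal.ofReal |ξ k ω| ∂P) * ∫⁻ y, UMH j y ∂nuMH := by
    rw [markov_lintegral hmeas hmarg hMarkov k hB (UMH_measurable j)]
    rw [lintegral_congr_ae (g := fun ω => UMH (j+1) (ξ k ω)
        + ENNReal.ofReal |ξ k ω| * ∫⁻ y, UMH j y ∂nuMH)
      (by filter_upwards [hmem] with ω hω using QMH_lintegral_UMH hω)]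
    rw [lintegral_add_left (show Measurable fun ω => UMH (j+1) (ξ k ω) from
      (UMH_measurable (j+1)).comp (hmeas k))]
    congr 1
    exact lintegral_mul_const _ ((by fun_prop : Measurable fun x : ℝ =>
      ENNReal.ofReal |x|).comp (hmeas k))
  have hV : ∫⁻ ω in (ξ 0)⁻¹' B, VMH j (ξ (k+1) ω) ∂P
      = (∫⁻ ω in (ξ 0)⁻¹' B, VMH (j+1) (ξ k ω) ∂P)
        + (∫⁻ ω in (ξ 0)⁻¹' B, ENNReal.ofReal |ξ k ω| ∂P) * ∫⁻ y, UMH j y ∂nuMH := by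
    rw [markov_lintegral hmeas hmarg hMarkov k hB (VMH_measurable j)]
    rw [lintegral_congr_ae (g := fun ω => VMH (j+1) (ξ k ω)
        + ENNReal.ofReal |ξ k ω| * ∫⁻ y, VMH j y ∂nuMH)
      (by filter_upwards [hmem] with ω hω using QMH_lintegral_VMH hω)]
    rw [lintegral_add_left (show Measurable fun ω => VMH (j+1) (ξ k ω) from
      (VMH_measurable (j+1)).comp (hmeas k)), CMH_symm]
    congr 1
    exact lintegral_mul_const _ ((by fun_prop : Measurable fun x : ℝ =>
      ENNReal.ofReal |x|).comp (hmeas k))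
  have hfinU : ∫⁻ ω in (ξ 0)⁻¹' B, UMH (j+1) (ξ k ω) ∂P ≠ ∞ :=
    ne_top_of_le_ne_top (by norm_num)
      (lint_le_one hmeas hmarg (fun x hx => UMH_le_one hx) k B)
  have hfinV : ∫⁻ ω in (ξ 0)⁻¹' B, VMH (j+1) (ξ k ω) ∂P ≠ ∞ :=
    ne_top_of_le_ne_top (by norm_num)
      (lint_le_one hmeas hmarg (fun x hx => VMH_le_one hx) k B)
  have hfinC : (∫⁻ ω in (ξ 0)⁻¹' B, ENNReal.ofReal |ξ k ω| ∂P)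
      * (∫⁻ y, UMH j y ∂nuMH) ≠ ∞ := by
    refine ne_top_of_le_ne_top (b := 1 * 2) (by norm_num) ?_
    gcongr
    · refine lint_le_one (f := fun x => ENNReal.ofReal |x|) hmeas hmarg
        (fun x hx => ?_) k B
      rw [show (1:ℝ≥0∞) = ENNReal.ofReal 1 by simp]
      exact ENNReal.ofReal_le_ofReal (abs_le.mpr ⟨hx.1, hx.2⟩)
    · exact CMH_le_two j
  rw [hU, hV, ENNReal.toReal_add hfinU hfinC, ENNReal.toReal_add hfinV hfinC]
  ring
end aux4

lemma piMH_singleton : piMH ({(0:ℝ)} : Set ℝ) = 0 := by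
  rw [piMH, withDensity_apply _ (measurableSet_singleton 0), setLIntegral_const,
    Measure.restrict_apply (measurableSet_singleton 0)]
  have : volume (({(0:ℝ)} : Set ℝ) ∩ Set.Icc (-1:ℝ) 1) = 0 :=
    measure_mono_null Set.inter_subset_left (Real.volume_singleton)
  rw [this, mul_zero]

lemma ae_piMH_mem_Icc : ∀ᵐ x ∂piMH, x ∈ Set.Icc (-1:ℝ) 1 := by
  filter_upwards [measure_eq_zero_iff_ae_notMem.mp piMH_compl_Icc] with y h
  simpa using h

/-- For the stationary Metropolis–Hastings chain with kernel `Q`, marginal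
`π(dx) = dx/2` on `[-1,1]`, and `X_i = sign(ξ_i)`:
`𝔼(X₀ X_m) = 1/(m+1)`; equivalently `∫ (1-|x|)^m π(dx) = 1/(m+1)`. -/
theorem statement17
    {Ω : Type*} [MeasurableSpace Ω] (P : Measure Ω) [IsProbabilityMeasure P]
    (ξ : ℕ → Ω → ℝ)
    (hmeas : ∀ i, Measurable (ξ i))
    (hmarg : ∀ i, P.map (ξ i) = piMH)
    (hMarkov : ∀ (k : ℕ) (A : Set ℝ), MeasurableSet A →
      (P[fun ω => Set.indicator A (fun _ => (1 : ℝ)) (ξ (k + 1) ω) | pastFilt ξ k])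
        =ᵐ[P] fun ω => (QMH (ξ k ω) A).toReal)
    (m : ℕ) :
    (∫ ω, Real.sign (ξ 0 ω) * Real.sign (ξ m ω) ∂P = 1 / (m + 1)) ∧
    (∫ x, (1 - |x|) ^ m ∂piMH = 1 / (m + 1)) := by
  have hpi := integral_piMH_pow m
  refine ⟨?_, hpi⟩
  -- iterate the one-step recurrence
  have hiter : ∀ (B : Set ℝ), MeasurableSet B → ∀ (k j : ℕ),
      (∫⁻ ω in (ξ 0)⁻¹' B, UMH j (ξ k ω) ∂P).toReal
        - (∫⁻ ω in (ξ 0)⁻¹' B, VMH j (ξ k ω) ∂P).toReal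
      = (∫⁻ ω in (ξ 0)⁻¹' B, UMH (k+j) (ξ 0 ω) ∂P).toReal
        - (∫⁻ ω in (ξ 0)⁻¹' B, VMH (k+j) (ξ 0 ω) ∂P).toReal := by
    intro B hB k
    induction k with
    | zero => intro j; simp
    | succ k ih =>
      intro j
      rw [step_UV hmeas hmarg hMarkov k j hB, ih (j+1),
        show k + (j+1) = k + 1 + j from by omega]
  -- endpoint at k = 0, j = m : integrals against piMH
  have hmap : ∀ (B : Set ℝ), MeasurableSet B → ∀ g : ℝ → ℝ≥0∞, Measurable g →
      ∫⁻ ω in (ξ 0)⁻¹' B, g (ξ 0 ω) ∂P = ∫⁻ x in B, g x ∂piMH := by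
    intro B hB g hg
    rw [← hmarg 0, setLIntegral_map hB hg (hmeas 0)]
  have hIU : (∫⁻ ω in (ξ 0)⁻¹' (Set.Ioi 0), UMH m (ξ 0 ω) ∂P)
      = ∫⁻ x in Set.Ioi (0:ℝ), ENNReal.ofReal ((1 - |x|)^m) ∂piMH := by
    rw [hmap _ measurableSet_Ioi _ (UMH_measurable m)]
    refine setLIntegral_congr_fun measurableSet_Ioi (fun x hx => ?_)
    exact Set.indicator_of_mem hx _
  have hIUV : (∫⁻ ω in (ξ 0)⁻¹' (Set.Ioi 0), VMH m (ξ 0 ω) ∂P) = 0 := by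
    rw [hmap _ measurableSet_Ioi _ (VMH_measurable m)]
    have hz : ∀ x ∈ Set.Ioi (0:ℝ), VMH m x = (0 : ℝ≥0∞) := fun x hx => by
      unfold VMH
      exact Set.indicator_of_notMem (by simp at hx ⊢; linarith) _
    rw [setLIntegral_congr_fun measurableSet_Ioi hz, lintegral_zero]
  have hIV : (∫⁻ ω in (ξ 0)⁻¹' (Set.Iio 0), VMH m (ξ 0 ω) ∂P)
      = ∫⁻ x in Set.Iio (0:ℝ), ENNReal.ofReal ((1 - |x|)^m) ∂piMH := by
    rw [hmap _ measurableSet_Iio _ (VMH_measurable m)]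
    refine setLIntegral_congr_fun measurableSet_Iio (fun x hx => ?_)
    exact Set.indicator_of_mem hx _
  have hIVU : (∫⁻ ω in (ξ 0)⁻¹' (Set.Iio 0), UMH m (ξ 0 ω) ∂P) = 0 := by
    rw [hmap _ measurableSet_Iio _ (UMH_measurable m)]
    have hz : ∀ x ∈ Set.Iio (0:ℝ), UMH m x = (0 : ℝ≥0∞) := fun x hx => by
      unfold UMH
      exact Set.indicator_of_notMem (by simp at hx ⊢; linarith) _
    rw [setLIntegral_congr_fun measurableSet_Iio hz, lintegral_zero]
  -- endpoint at k = m, j = 0 : measures of sign events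
  have hind0 : ∀ (B C : Set ℝ), MeasurableSet B → MeasurableSet C →
      (∫⁻ ω in (ξ 0)⁻¹' B, (C.indicator (fun _ => (1:ℝ≥0∞))) (ξ m ω) ∂P)
        = P ((ξ m)⁻¹' C ∩ (ξ 0)⁻¹' B) := by
    intro B C hB hC
    have h1 : (fun ω => (C.indicator (fun _ => (1:ℝ≥0∞))) (ξ m ω))
        = ((ξ m)⁻¹' C).indicator (fun _ => (1:ℝ≥0∞)) := by
      funext ω; by_cases h : ξ m ω ∈ C <;> simp [Set.indicator_apply, h]
    rw [h1, lintegral_indicator_const ((hmeas m) hC), one_mul,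
      Measure.restrict_apply ((hmeas m) hC)]
  have hU0 : UMH 0 = (Set.Ioi (0:ℝ)).indicator (fun _ => (1:ℝ≥0∞)) := by
    funext y; unfold UMH; simp
  have hV0 : VMH 0 = (Set.Iio (0:ℝ)).indicator (fun _ => (1:ℝ≥0∞)) := by
    funext y; unfold VMH; simp
  -- the expectation as a combination of four probabilities
  have hE : ∫ ω, Real.sign (ξ 0 ω) * Real.sign (ξ m ω) ∂P
      = (P ((ξ m)⁻¹' (Set.Ioi 0) ∩ (ξ 0)⁻¹' (Set.Ioi 0))).toReal
        - (P ((ξ m)⁻¹' (Set.Iio 0) ∩ (ξ 0)⁻¹' (Set.Ioi 0))).toReal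
        - ((P ((ξ m)⁻¹' (Set.Ioi 0) ∩ (ξ 0)⁻¹' (Set.Iio 0))).toReal
        - (P ((ξ m)⁻¹' (Set.Iio 0) ∩ (ξ 0)⁻¹' (Set.Iio 0))).toReal) := by
    have hms : ∀ (C B : Set ℝ), MeasurableSet C → MeasurableSet B →
        MeasurableSet ((ξ m)⁻¹' C ∩ (ξ 0)⁻¹' B) :=
      fun C B hC hB => ((hmeas m) hC).inter ((hmeas 0) hB)
    have hint : ∀ (S : Set Ω), MeasurableSet S →
        Integrable (S.indicator fun _ => (1:ℝ)) P :=
      fun S hS => (integrable_const (1:ℝ)).indicator hS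
    have hval : ∀ (S : Set Ω), MeasurableSet S →
        ∫ ω, S.indicator (fun _ => (1:ℝ)) ω ∂P = (P S).toReal := by
      intro S hS
      rw [integral_indicator_const (1:ℝ) hS, smul_eq_mul, mul_one]
      rfl
    have hfun : (fun ω => Real.sign (ξ 0 ω) * Real.sign (ξ m ω))
        = fun ω =>
          ((ξ m)⁻¹' (Set.Ioi 0) ∩ (ξ 0)⁻¹' (Set.Ioi 0)).indicator (fun _ => (1:ℝ)) ω
          - ((ξ m)⁻¹' (Set.Iio 0) ∩ (ξ 0)⁻¹' (Set.Ioi 0)).indicator (fun _ => (1:ℝ)) ω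
          - (((ξ m)⁻¹' (Set.Ioi 0) ∩ (ξ 0)⁻¹' (Set.Iio 0)).indicator (fun _ => (1:ℝ)) ω
          - ((ξ m)⁻¹' (Set.Iio 0) ∩ (ξ 0)⁻¹' (Set.Iio 0)).indicator (fun _ => (1:ℝ)) ω) := by
      funext ω
      rcases lt_trichotomy (ξ 0 ω) 0 with h0|h0|h0 <;>
        rcases lt_trichotomy (ξ m ω) 0 with h1|h1|h1 <;>
        simp [Set.indicator_apply, Set.mem_inter_iff, Set.mem_preimage, Set.mem_Ioi,
          Set.mem_Iio, h0, h1, Real.sign_of_pos, Real.sign_of_neg, Real.sign_zero,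
          lt_asymm, lt_irrefl, not_lt_of_gt]
    rw [hfun]
    rw [integral_sub (f := fun ω =>
        ((ξ m)⁻¹' (Set.Ioi 0) ∩ (ξ 0)⁻¹' (Set.Ioi 0)).indicator (fun _ => (1:ℝ)) ω
          - ((ξ m)⁻¹' (Set.Iio 0) ∩ (ξ 0)⁻¹' (Set.Ioi 0)).indicator (fun _ => (1:ℝ)) ω)
      (g := fun ω =>
        ((ξ m)⁻¹' (Set.Ioi 0) ∩ (ξ 0)⁻¹' (Set.Iio 0)).indicator (fun _ => (1:ℝ)) ω
          - ((ξ m)⁻¹' (Set.Iio 0) ∩ (ξ 0)⁻¹' (Set.Iio 0)).indicator (fun _ => (1:ℝ)) ω)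
      ((hint _ (hms _ _ measurableSet_Ioi measurableSet_Ioi)).sub
        (hint _ (hms _ _ measurableSet_Iio measurableSet_Ioi)))
      ((hint _ (hms _ _ measurableSet_Ioi measurableSet_Iio)).sub
        (hint _ (hms _ _ measurableSet_Iio measurableSet_Iio))),
      integral_sub (hint _ (hms _ _ measurableSet_Ioi measurableSet_Ioi))
        (hint _ (hms _ _ measurableSet_Iio measurableSet_Ioi)),
      integral_sub (hint _ (hms _ _ measurableSet_Ioi measurableSet_Iio))
        (hint _ (hms _ _ measurableSet_Iio measurableSet_Iio)),
      hval _ (hms _ _ measurableSet_Ioi measurableSet_Ioi),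
      hval _ (hms _ _ measurableSet_Iio measurableSet_Ioi),
      hval _ (hms _ _ measurableSet_Ioi measurableSet_Iio),
      hval _ (hms _ _ measurableSet_Iio measurableSet_Iio)]

  -- put things together
  have hmain : ∫ ω, Real.sign (ξ 0 ω) * Real.sign (ξ m ω) ∂P
      = (∫⁻ x in Set.Ioi (0:ℝ), ENNReal.ofReal ((1 - |x|)^m) ∂piMH).toReal
        + (∫⁻ x in Set.Iio (0:ℝ), ENNReal.ofReal ((1 - |x|)^m) ∂piMH).toReal := by
    have e1 := hiter (Set.Ioi 0) measurableSet_Ioi m 0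
    have e2 := hiter (Set.Iio 0) measurableSet_Iio m 0
    rw [hU0, hV0, hind0 _ _ measurableSet_Ioi measurableSet_Ioi,
      hind0 _ _ measurableSet_Ioi measurableSet_Iio] at e1
    rw [hU0, hV0, hind0 _ _ measurableSet_Iio measurableSet_Ioi,
      hind0 _ _ measurableSet_Iio measurableSet_Iio] at e2
    simp only [Nat.add_zero] at e1 e2
    rw [hIU, hIUV] at e1
    rw [hIV, hIVU] at e2
    rw [hE, e1, e2]
    simp
  rw [hmain]
  -- combine the two half-line integrals into the full integral
  have hfin : ∀ s : Set ℝ, ∫⁻ x in s, ENNReal.ofReal ((1 - |x|)^m) ∂piMH ≠ ∞ := by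
    intro s
    refine ne_top_of_le_ne_top (b := 1) (by norm_num) ?_
    calc ∫⁻ x in s, ENNReal.ofReal ((1 - |x|)^m) ∂piMH
        ≤ ∫⁻ _ in s, 1 ∂piMH := by
          refine lintegral_mono_ae ?_
          filter_upwards [ae_restrict_of_ae (s := s) ae_piMH_mem_Icc] with x hx
          rw [show (1:ℝ≥0∞) = ENNReal.ofReal 1 by simp]
          refine ENNReal.ofReal_le_ofReal (pow_le_one₀ ?_ ?_) <;>
            nlinarith [abs_le.mpr ⟨hx.1, hx.2⟩, abs_nonneg x]
      _ = piMH s := by simp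
      _ ≤ 1 := prob_le_one
  rw [← ENNReal.toReal_add (hfin _) (hfin _),
    ← lintegral_union measurableSet_Iio (Set.disjoint_left.mpr
      (fun x hx hx' => absurd hx' (by simp at hx ⊢; linarith))),
    show Set.Ioi (0:ℝ) ∪ Set.Iio 0 = ({0}ᶜ : Set ℝ) from by
      ext x
      simp [Set.mem_union, Set.mem_Ioi, Set.mem_Iio, or_comm, lt_or_lt_iff_ne]]
  have hcompl : ({(0:ℝ)}ᶜ : Set ℝ) =ᵐ[piMH] (Set.univ : Set ℝ) := by
    rw [Filter.eventuallyEq_set]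
    have := measure_eq_zero_iff_ae_notMem.mp piMH_singleton
    filter_upwards [this] with x hx
    simp [hx]
  rw [setLIntegral_congr hcompl, Measure.restrict_univ]
  rw [integral_eq_lintegral_of_nonneg_ae ?_ ?_] at hpi
  · rw [hpi]
  · filter_upwards [ae_piMH_mem_Icc] with x hx
    have : (0:ℝ) ≤ 1 - |x| := by nlinarith [abs_le.mpr ⟨hx.1, hx.2⟩]
    positivity
  · exact (Continuous.pow (by continuity) m).aestronglyMeasurable
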